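/- Let 1/2 < σ < 1, β ∈ ℝ, 0 < ε < 1, and let f_ε be the regularization of f(ρ) = β ρ^σ as above. Then there is a constant C₂ depending only on σ and β such that |√ρ f_ε'(ρ)| + |ρ^{3/2} f_ε''(ρ)| ≤ C₂ ρ^{σ-1/2} for all ρ ≥ 0. -/

import Mathlib

/-- Generalized binomial coefficient `binom(x, j) = x(x-1)⋯(x-j+1)/j!`. -/
noncomputable def gbinom (x : ℝ) (j : ℕ) : ℝ :=
  (∏ i ∈ Finset.range j, (x - i)) / (Nat.factorial j)

/-- The cubic polynomial `Q_ε(ρ) = β ε^{2σ-2} Σ_{j=0}^{3} binom(j-σ, j)(1-ρ/ε²)^j`. -/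
noncomputable def Qreg (σ β ε ρ : ℝ) : ℝ :=
  β * ε ^ (2 * σ - 2) *
    ∑ j ∈ Finset.range 4, gbinom ((j : ℝ) - σ) j * (1 - ρ / ε ^ 2) ^ j

/-- The local regularization `f_ε` of `f(ρ) = β ρ^σ`. -/
noncomputable def freg (σ β ε ρ : ℝ) : ℝ :=
  if ε ^ 2 ≤ ρ then β * ρ ^ σ else ρ * Qreg σ β ε ρ

namespace Stmt13Aux

open Set

noncomputable def S0 (σ u : ℝ) : ℝ :=
  1 + (1-σ)*u + ((2-σ)*(1-σ)/2)*u^2 + ((3-σ)*(2-σ)*(1-σ)/6)*u^3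

noncomputable def S1 (σ u : ℝ) : ℝ :=
  (1-σ) + ((2-σ)*(1-σ))*u + ((3-σ)*(2-σ)*(1-σ)/2)*u^2

noncomputable def S2 (σ u : ℝ) : ℝ :=
  (2-σ)*(1-σ) + ((3-σ)*(2-σ)*(1-σ))*u

/-- first derivative of `ρ * Qreg` -/
noncomputable def G1 (σ β ε ρ : ℝ) : ℝ :=
  (β * ε ^ (2*σ-2)) * (S0 σ (1 - ρ/ε^2) - (ρ/ε^2) * S1 σ (1 - ρ/ε^2))

/-- second derivative of `ρ * Qreg` -/
noncomputable def G2 (σ β ε ρ : ℝ) : ℝ :=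
  (β * ε ^ (2*σ-2)) * (-(2/ε^2) * S1 σ (1 - ρ/ε^2) + (ρ/(ε^2)^2) * S2 σ (1 - ρ/ε^2))

lemma Qreg_eq (σ β ε ρ : ℝ) :
    Qreg σ β ε ρ = (β * ε ^ (2*σ-2)) * S0 σ (1 - ρ / ε^2) := by
  unfold Qreg S0 gbinom
  simp [Finset.sum_range_succ, Finset.prod_range_succ, Nat.factorial]
  ring_nf
  tauto

lemma hasDerivAt_u (ε ρ : ℝ) :
    HasDerivAt (fun x : ℝ => 1 - x/ε^2) (-(1/ε^2)) ρ := by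
  simpa using ((hasDerivAt_id ρ).div_const (ε^2)).const_sub 1

lemma hasDerivAt_S0 (σ ε ρ : ℝ) :
    HasDerivAt (fun x => S0 σ (1 - x/ε^2)) (-(S1 σ (1 - ρ/ε^2) / ε^2)) ρ := by
  have hu := hasDerivAt_u ε ρ
  have h := (((hu.const_mul (1-σ)).add ((hu.pow 2).const_mul ((2-σ)*(1-σ)/2))).add
      ((hu.pow 3).const_mul ((3-σ)*(2-σ)*(1-σ)/6))).const_add 1
  have hfun : (fun x => S0 σ (1 - x/ε^2)) =
      fun x => 1 + (((1-σ)*(1 - x/ε^2) + ((2-σ)*(1-σ)/2)*(1 - x/ε^2)^2)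
        + ((3-σ)*(2-σ)*(1-σ)/6)*(1 - x/ε^2)^3) := by
    funext x; simp only [S0]; ring
  rw [hfun]
  refine h.congr_deriv ?_
  simp [S1]; ring

lemma hasDerivAt_S1 (σ ε ρ : ℝ) :
    HasDerivAt (fun x => S1 σ (1 - x/ε^2)) (-(S2 σ (1 - ρ/ε^2) / ε^2)) ρ := by
  have hu := hasDerivAt_u ε ρ
  have h := ((hu.const_mul ((2-σ)*(1-σ))).add
      ((hu.pow 2).const_mul ((3-σ)*(2-σ)*(1-σ)/2))).const_add (1-σ)
  have hfun : (fun x => S1 σ (1 - x/ε^2)) =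
      fun x => (1-σ) + (((2-σ)*(1-σ))*(1 - x/ε^2)
        + ((3-σ)*(2-σ)*(1-σ)/2)*(1 - x/ε^2)^2) := by
    funext x; simp only [S1]; ring
  rw [hfun]
  refine h.congr_deriv ?_
  simp [S2]; ring

lemma hasDerivAt_G (σ β ε ρ : ℝ) :
    HasDerivAt (fun x => x * Qreg σ β ε x) (G1 σ β ε ρ) ρ := by
  have h := ((hasDerivAt_id ρ).mul (hasDerivAt_S0 σ ε ρ)).const_mul (β * ε ^ (2*σ-2))
  have hfun : (fun x => x * Qreg σ β ε x) =
      fun x => (β * ε ^ (2*σ-2)) * (x * S0 σ (1 - x/ε^2)) := by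
    funext x; rw [Qreg_eq]; ring
  rw [hfun]
  refine h.congr_deriv ?_
  simp only [G1, id_eq]; ring

lemma hasDerivAt_G1 (σ β ε ρ : ℝ) :
    HasDerivAt (G1 σ β ε) (G2 σ β ε ρ) ρ := by
  have h := ((hasDerivAt_S0 σ ε ρ).sub
      (((hasDerivAt_id ρ).div_const (ε^2)).mul (hasDerivAt_S1 σ ε ρ))).const_mul
      (β * ε ^ (2*σ-2))
  have hfun : G1 σ β ε =
      fun x => (β * ε ^ (2*σ-2)) * (S0 σ (1 - x/ε^2) - (x/ε^2) * S1 σ (1 - x/ε^2)) := rfl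
  rw [hfun]
  refine h.congr_deriv ?_
  simp only [G2, id_eq]; ring

/- rpow helpers -/
lemma hpow1 (σ ε : ℝ) (hε : 0 < ε) : ε ^ (2*σ-2) = ((ε^2:ℝ)) ^ (σ-1) := by
  rw [← Real.rpow_natCast ε 2, ← Real.rpow_mul hε.le]
  congr 1
  push_cast
  ring

lemma hpow2 (σ ε : ℝ) (hε : 0 < ε) : ε ^ (2*σ-2) / ε^2 = ((ε^2:ℝ)) ^ (σ-1-1) := by
  rw [← Real.rpow_natCast ε 2, ← Real.rpow_mul hε.le, ← Real.rpow_sub hε]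
  congr 1
  push_cast
  ring

lemma hpow3 (σ ε : ℝ) (hε : 0 < ε) : (ε^2:ℝ) * (ε ^ (2*σ-2)) = ((ε^2:ℝ)) ^ σ := by
  rw [← Real.rpow_natCast ε 2, ← Real.rpow_mul hε.le, ← Real.rpow_add hε]
  congr 1
  push_cast
  ring

lemma hu_boundary (ε : ℝ) (hε : 0 < ε) : 1 - (ε^2:ℝ)/ε^2 = 0 := by
  have : (ε:ℝ)^2 ≠ 0 := pow_ne_zero 2 hε.ne'
  field_simp
  simp

lemma hmatch0 (σ β ε : ℝ) (hε : 0 < ε) :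
    (ε^2:ℝ) * Qreg σ β ε (ε^2) = β * ((ε^2:ℝ)) ^ σ := by
  rw [Qreg_eq, hu_boundary ε hε, ← hpow3 σ ε hε]
  simp [S0]
  ring

lemma hmatch1 (σ β ε : ℝ) (hε : 0 < ε) :
    G1 σ β ε (ε^2) = β * (σ * ((ε^2:ℝ)) ^ (σ-1)) := by
  have h2 : (ε:ℝ)^2 ≠ 0 := pow_ne_zero 2 hε.ne'
  unfold G1
  rw [hu_boundary ε hε, ← hpow1 σ ε hε]
  simp only [S0, S1]
  field_simp
  ring

lemma hmatch2 (σ β ε : ℝ) (hε : 0 < ε) :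
    G2 σ β ε (ε^2) = β * (σ * ((σ-1) * ((ε^2:ℝ)) ^ (σ-1-1))) := by
  have h2 : (ε:ℝ)^2 ≠ 0 := pow_ne_zero 2 hε.ne'
  unfold G2
  rw [hu_boundary ε hε, ← hpow2 σ ε hε]
  simp only [S1, S2]
  field_simp
  ring

/- derivatives of freg -/
lemma deriv1_lt (σ β ε ρ : ℝ) (hρ : ρ < ε^2) :
    deriv (freg σ β ε) ρ = G1 σ β ε ρ := by
  have hev : freg σ β ε =ᶠ[nhds ρ] fun x => x * Qreg σ β ε x := by
    filter_upwards [Iio_mem_nhds hρ] with x hx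
    simp only [freg, if_neg (not_le.mpr (mem_Iio.mp hx))]
  rw [hev.deriv_eq, (hasDerivAt_G σ β ε ρ).deriv]

lemma hasDerivAt_freg_boundary (σ β ε : ℝ) (hε : 0 < ε) :
    HasDerivAt (freg σ β ε) (β * (σ * ((ε^2:ℝ))^(σ-1))) (ε^2) := by
  have hpos : (0:ℝ) < ε^2 := pow_pos hε 2
  have heq : ∀ y ∈ Iic ((ε:ℝ)^2), freg σ β ε y = y * Qreg σ β ε y := by
    intro y hy
    rcases lt_or_eq_of_le (mem_Iic.mp hy) with h | h
    · simp only [freg, if_neg (not_le.mpr h)]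
    · subst h
      simp only [freg, if_pos le_rfl]
      exact (hmatch0 σ β ε hε).symm
  have h1 : HasDerivWithinAt (freg σ β ε) (β * (σ * ((ε^2:ℝ))^(σ-1))) (Iic (ε^2)) (ε^2) := by
    have h := (hasDerivAt_G σ β ε (ε^2)).hasDerivWithinAt (s := Iic (ε^2))
    rw [hmatch1 σ β ε hε] at h
    exact h.congr heq (heq _ (mem_Iic.mpr le_rfl))
  have h2 : HasDerivWithinAt (freg σ β ε) (β * (σ * ((ε^2:ℝ))^(σ-1))) (Ici (ε^2)) (ε^2) := by
    have h := ((Real.hasDerivAt_rpow_const (p := σ)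
      (Or.inl hpos.ne')).const_mul β).hasDerivWithinAt (s := Ici ((ε:ℝ)^2))
    exact h.congr (fun y hy => by simp only [freg, if_pos (mem_Ici.mp hy)])
      (by simp only [freg, if_pos le_rfl])
  have h := h1.union h2
  rw [Iic_union_Ici] at h
  exact hasDerivWithinAt_univ.mp h

lemma deriv1_ge (σ β ε ρ : ℝ) (hε : 0 < ε) (hρ : ε^2 ≤ ρ) :
    deriv (freg σ β ε) ρ = β * (σ * ρ ^ (σ-1)) := by
  rcases eq_or_lt_of_le hρ with h | h
  · rw [← h]
    exact (hasDerivAt_freg_boundary σ β ε hε).deriv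
  · have hρ0 : (0:ℝ) < ρ := lt_of_le_of_lt (by positivity) h
    have hev : freg σ β ε =ᶠ[nhds ρ] fun x => β * x ^ σ := by
      filter_upwards [Ioi_mem_nhds h] with x hx
      simp only [freg, if_pos (le_of_lt (mem_Ioi.mp hx))]
    rw [hev.deriv_eq,
      ((Real.hasDerivAt_rpow_const (p := σ) (Or.inl hρ0.ne')).const_mul β).deriv]

lemma hasDerivAt_F1 (σ β x : ℝ) (hx : x ≠ 0) :
    HasDerivAt (fun y => β * (σ * y ^ (σ-1))) (β * (σ * ((σ-1) * x ^ (σ-1-1)))) x :=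
  ((Real.hasDerivAt_rpow_const (p := σ-1) (Or.inl hx)).const_mul σ).const_mul β

lemma deriv2_lt (σ β ε ρ : ℝ) (hρ : ρ < ε^2) :
    iteratedDeriv 2 (freg σ β ε) ρ = G2 σ β ε ρ := by
  rw [iteratedDeriv_succ, iteratedDeriv_one]
  have hev : deriv (freg σ β ε) =ᶠ[nhds ρ] G1 σ β ε := by
    filter_upwards [Iio_mem_nhds hρ] with x hx using deriv1_lt σ β ε x (mem_Iio.mp hx)
  rw [hev.deriv_eq, (hasDerivAt_G1 σ β ε ρ).deriv]

lemma deriv2_ge (σ β ε ρ : ℝ) (hε : 0 < ε) (hρ : ε^2 ≤ ρ) :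
    iteratedDeriv 2 (freg σ β ε) ρ = β * (σ * ((σ-1) * ρ ^ (σ-1-1))) := by
  have hpos : (0:ℝ) < ε^2 := pow_pos hε 2
  rw [iteratedDeriv_succ, iteratedDeriv_one]
  rcases eq_or_lt_of_le hρ with h | h
  · rw [← h]
    have heq : ∀ y ∈ Iic ((ε:ℝ)^2), deriv (freg σ β ε) y = G1 σ β ε y := by
      intro y hy
      rcases lt_or_eq_of_le (mem_Iic.mp hy) with h' | h'
      · exact deriv1_lt σ β ε y h'
      · subst h'
        rw [deriv1_ge σ β ε _ hε le_rfl, hmatch1 σ β ε hε]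
    have h1 : HasDerivWithinAt (deriv (freg σ β ε))
        (β * (σ * ((σ-1) * ((ε^2:ℝ)) ^ (σ-1-1)))) (Iic (ε^2)) (ε^2) := by
      have hg := (hasDerivAt_G1 σ β ε (ε^2)).hasDerivWithinAt (s := Iic (ε^2))
      rw [hmatch2 σ β ε hε] at hg
      exact hg.congr heq (heq _ (mem_Iic.mpr le_rfl))
    have h2 : HasDerivWithinAt (deriv (freg σ β ε))
        (β * (σ * ((σ-1) * ((ε^2:ℝ)) ^ (σ-1-1)))) (Ici (ε^2)) (ε^2) := by
      have hg := (hasDerivAt_F1 σ β _ hpos.ne').hasDerivWithinAt (s := Ici ((ε:ℝ)^2))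
      exact hg.congr (fun y hy => deriv1_ge σ β ε y hε (mem_Ici.mp hy))
        (deriv1_ge σ β ε _ hε le_rfl)
    have hh := h1.union h2
    rw [Iic_union_Ici] at hh
    exact (hasDerivWithinAt_univ.mp hh).deriv
  · have hρ0 : (0:ℝ) < ρ := lt_trans hpos h
    have hev : deriv (freg σ β ε) =ᶠ[nhds ρ] fun x => β * (σ * x ^ (σ-1)) := by
      filter_upwards [Ioi_mem_nhds h] with x hx
      exact deriv1_ge σ β ε x hε (le_of_lt (mem_Ioi.mp hx))
    rw [hev.deriv_eq, (hasDerivAt_F1 σ β ρ hρ0.ne').deriv]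

/- bounds -/
lemma cub_bound (σ : ℝ) (hσ0 : 1/2 < σ) (hσ1 : σ < 1) :
    (3-σ)*(2-σ)*(1-σ) ≤ 6 := by
  nlinarith [mul_nonneg (by linarith : (0:ℝ) ≤ σ) (sq_nonneg (σ-3))]

lemma key_mul (c t : ℝ) (hc1 : c ≤ 1) (ht0 : 0 ≤ t) (ht1 : t ≤ 1) : c*t ≤ 1 :=
  le_trans (mul_le_mul_of_nonneg_right hc1 ht0) (by linarith)

lemma S0_bound (σ u : ℝ) (hσ0 : 1/2 < σ) (hσ1 : σ < 1) (hu0 : 0 ≤ u) (hu1 : u ≤ 1) :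
    |S0 σ u| ≤ 4 := by
  have h2 : u^2 ≤ 1 := pow_le_one₀ hu0 hu1
  have h3 : u^3 ≤ 1 := pow_le_one₀ hu0 hu1
  have h2n : 0 ≤ u^2 := pow_nonneg hu0 2
  have h3n : 0 ≤ u^3 := pow_nonneg hu0 3
  have hc1 : (0:ℝ) ≤ 1-σ := by linarith
  have hc2 : (0:ℝ) ≤ (2-σ)*(1-σ)/2 := by nlinarith
  have hc3 : (0:ℝ) ≤ (3-σ)*(2-σ)*(1-σ)/6 := by nlinarith
  have b1 : (1-σ)*u ≤ 1 := key_mul _ _ (by linarith) hu0 hu1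
  have b2 : ((2-σ)*(1-σ)/2)*u^2 ≤ 1 := key_mul _ _ (by nlinarith) h2n h2
  have b3 : ((3-σ)*(2-σ)*(1-σ)/6)*u^3 ≤ 1 :=
    key_mul _ _ (by nlinarith [cub_bound σ hσ0 hσ1]) h3n h3
  have n1 : 0 ≤ (1-σ)*u := mul_nonneg hc1 hu0
  have n2 : 0 ≤ ((2-σ)*(1-σ)/2)*u^2 := mul_nonneg hc2 h2n
  have n3 : 0 ≤ ((3-σ)*(2-σ)*(1-σ)/6)*u^3 := mul_nonneg hc3 h3n
  rw [abs_le]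
  unfold S0
  constructor <;> linarith

lemma S1_bound (σ u : ℝ) (hσ0 : 1/2 < σ) (hσ1 : σ < 1) (hu0 : 0 ≤ u) (hu1 : u ≤ 1) :
    |S1 σ u| ≤ 6 := by
  have h2 : u^2 ≤ 1 := pow_le_one₀ hu0 hu1
  have h2n : 0 ≤ u^2 := pow_nonneg hu0 2
  have hc1 : (0:ℝ) ≤ 1-σ := by linarith
  have hc2 : (0:ℝ) ≤ (2-σ)*(1-σ) := by nlinarith
  have hc3 : (0:ℝ) ≤ (3-σ)*(2-σ)*(1-σ)/2 := by nlinarith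
  have b2 : ((2-σ)*(1-σ))*u ≤ 2 := by nlinarith [key_mul ((2-σ)*(1-σ)/2) u (by nlinarith) hu0 hu1]
  have b3 : ((3-σ)*(2-σ)*(1-σ)/2)*u^2 ≤ 3 := by
    nlinarith [key_mul ((3-σ)*(2-σ)*(1-σ)/6) (u^2) (by nlinarith [cub_bound σ hσ0 hσ1]) h2n h2]
  have n2 : 0 ≤ ((2-σ)*(1-σ))*u := mul_nonneg hc2 hu0
  have n3 : 0 ≤ ((3-σ)*(2-σ)*(1-σ)/2)*u^2 := mul_nonneg hc3 h2n
  rw [abs_le]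
  unfold S1
  constructor <;> linarith

lemma S2_bound (σ u : ℝ) (hσ0 : 1/2 < σ) (hσ1 : σ < 1) (hu0 : 0 ≤ u) (hu1 : u ≤ 1) :
    |S2 σ u| ≤ 8 := by
  have hc2 : (0:ℝ) ≤ (2-σ)*(1-σ) := by nlinarith
  have hc3 : (0:ℝ) ≤ (3-σ)*(2-σ)*(1-σ) := by nlinarith
  have b2 : (2-σ)*(1-σ) ≤ 2 := by nlinarith
  have b3 : ((3-σ)*(2-σ)*(1-σ))*u ≤ 6 := by
    nlinarith [key_mul ((3-σ)*(2-σ)*(1-σ)/6) u (by nlinarith [cub_bound σ hσ0 hσ1]) hu0 hu1]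
  have n3 : 0 ≤ ((3-σ)*(2-σ)*(1-σ))*u := mul_nonneg hc3 hu0
  rw [abs_le]
  unfold S2
  constructor <;> linarith

lemma G1_bound (σ β ε ρ : ℝ) (hσ0 : 1/2 < σ) (hσ1 : σ < 1) (hε : 0 < ε)
    (hρ0 : 0 ≤ ρ) (hρe : ρ ≤ ε^2) :
    |G1 σ β ε ρ| ≤ 10 * (|β| * ε ^ (2*σ-2)) := by
  have he : (0:ℝ) < ε^2 := pow_pos hε 2
  have hq0 : 0 ≤ ρ/ε^2 := div_nonneg hρ0 he.le
  have hq1 : ρ/ε^2 ≤ 1 := (div_le_one he).mpr hρe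
  have hu0 : 0 ≤ 1 - ρ/ε^2 := by linarith
  have hu1 : 1 - ρ/ε^2 ≤ 1 := by linarith
  have hS0 := S0_bound σ _ hσ0 hσ1 hu0 hu1
  have hS1 := S1_bound σ _ hσ0 hσ1 hu0 hu1
  have hin : |S0 σ (1 - ρ/ε^2) - (ρ/ε^2) * S1 σ (1 - ρ/ε^2)| ≤ 10 := by
    have h1 : |(ρ/ε^2) * S1 σ (1 - ρ/ε^2)| ≤ 6 := by
      rw [abs_mul, abs_of_nonneg hq0]
      calc (ρ/ε^2) * |S1 σ (1 - ρ/ε^2)| ≤ 1 * 6 :=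
        mul_le_mul hq1 hS1 (abs_nonneg _) one_pos.le
      _ = 6 := by norm_num
    calc |S0 σ (1 - ρ/ε^2) - (ρ/ε^2) * S1 σ (1 - ρ/ε^2)|
        ≤ |S0 σ (1 - ρ/ε^2)| + |(ρ/ε^2) * S1 σ (1 - ρ/ε^2)| := abs_sub _ _
      _ ≤ 4 + 6 := add_le_add hS0 h1
      _ = 10 := by norm_num
  unfold G1
  rw [abs_mul, abs_mul, abs_of_pos (Real.rpow_pos_of_pos hε _)]
  calc |β| * ε ^ (2*σ-2) * |S0 σ (1 - ρ/ε^2) - (ρ/ε^2) * S1 σ (1 - ρ/ε^2)|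
      ≤ |β| * ε ^ (2*σ-2) * 10 :=
        mul_le_mul_of_nonneg_left hin (by positivity)
    _ = 10 * (|β| * ε ^ (2*σ-2)) := by ring

lemma G2_bound (σ β ε ρ : ℝ) (hσ0 : 1/2 < σ) (hσ1 : σ < 1) (hε : 0 < ε)
    (hρ0 : 0 ≤ ρ) (hρe : ρ ≤ ε^2) :
    |G2 σ β ε ρ| ≤ 20 * (|β| * ε ^ (2*σ-2)) / ε^2 := by
  have he : (0:ℝ) < ε^2 := pow_pos hε 2
  have hq0 : 0 ≤ ρ/ε^2 := div_nonneg hρ0 he.le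
  have hq1 : ρ/ε^2 ≤ 1 := (div_le_one he).mpr hρe
  have hu0 : 0 ≤ 1 - ρ/ε^2 := by linarith
  have hu1 : 1 - ρ/ε^2 ≤ 1 := by linarith
  have hS1 := S1_bound σ _ hσ0 hσ1 hu0 hu1
  have hS2 := S2_bound σ _ hσ0 hσ1 hu0 hu1
  have hin : |(-(2/ε^2)) * S1 σ (1 - ρ/ε^2) + (ρ/(ε^2)^2) * S2 σ (1 - ρ/ε^2)| ≤ 20 / ε^2 := by
    have h1 : |(-(2/ε^2)) * S1 σ (1 - ρ/ε^2)| ≤ 2/ε^2 * 6 := by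
      rw [abs_mul, abs_neg, abs_of_nonneg (by positivity : (0:ℝ) ≤ 2/ε^2)]
      exact mul_le_mul_of_nonneg_left hS1 (by positivity)
    have h2 : |(ρ/(ε^2)^2) * S2 σ (1 - ρ/ε^2)| ≤ (1/ε^2) * 8 := by
      rw [abs_mul, abs_of_nonneg (by positivity : (0:ℝ) ≤ ρ/(ε^2)^2)]
      have hr : ρ/(ε^2)^2 ≤ 1/ε^2 := by
        rw [div_le_div_iff₀ (by positivity) he]
        nlinarith [he.le]
      exact mul_le_mul hr hS2 (abs_nonneg _) (by positivity)
    calc |(-(2/ε^2)) * S1 σ (1 - ρ/ε^2) + (ρ/(ε^2)^2) * S2 σ (1 - ρ/ε^2)|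
        ≤ |(-(2/ε^2)) * S1 σ (1 - ρ/ε^2)| + |(ρ/(ε^2)^2) * S2 σ (1 - ρ/ε^2)| := abs_add_le _ _
      _ ≤ 2/ε^2 * 6 + (1/ε^2) * 8 := add_le_add h1 h2
      _ = 20 / ε^2 := by ring
  unfold G2
  rw [abs_mul, abs_mul, abs_of_pos (Real.rpow_pos_of_pos hε _)]
  calc |β| * ε ^ (2*σ-2) * |(-(2/ε^2)) * S1 σ (1 - ρ/ε^2) + (ρ/(ε^2)^2) * S2 σ (1 - ρ/ε^2)|
      ≤ |β| * ε ^ (2*σ-2) * (20 / ε^2) :=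
        mul_le_mul_of_nonneg_left hin (by positivity)
    _ = 20 * (|β| * ε ^ (2*σ-2)) / ε^2 := by ring

end Stmt13Aux

open Stmt13Aux Set in
/-- For `1/2 < σ < 1`: `|√ρ f_ε'(ρ)| + |ρ^{3/2} f_ε''(ρ)| ≤ C₂ ρ^{σ-1/2}` for all `ρ ≥ 0`. -/
theorem stmt13 (σ β : ℝ) (hσ0 : 1 / 2 < σ) (hσ1 : σ < 1) :
    ∃ C₂ : ℝ, 0 < C₂ ∧ ∀ ε : ℝ, 0 < ε → ε < 1 → ∀ ρ : ℝ, 0 ≤ ρ →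
      |Real.sqrt ρ * deriv (freg σ β ε) ρ|
          + |ρ ^ ((3 : ℝ) / 2) * iteratedDeriv 2 (freg σ β ε) ρ|
        ≤ C₂ * ρ ^ (σ - 1 / 2) := by
  refine ⟨30 * |β| + 1, by positivity, ?_⟩
  intro ε hε hε1 ρ hρ0
  have he : (0:ℝ) < ε^2 := pow_pos hε 2
  rcases lt_or_ge ρ (ε^2) with hlt | hge
  · -- polynomial region
    rw [deriv1_lt σ β ε ρ hlt, deriv2_lt σ β ε ρ hlt]
    rcases eq_or_lt_of_le hρ0 with h0 | h0
    · rw [← h0]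
      simp [Real.sqrt_zero, Real.zero_rpow (show ((3:ℝ)/2) ≠ 0 by norm_num),
        Real.zero_rpow (show σ - 1/2 ≠ 0 by intro h; linarith [sub_eq_zero.mp h])]
      positivity
    · -- 0 < ρ < ε^2
      have hG1 := G1_bound σ β ε ρ hσ0 hσ1 hε hρ0 hlt.le
      have hG2 := G2_bound σ β ε ρ hσ0 hσ1 hε hρ0 hlt.le
      have hsq : Real.sqrt ρ = ρ ^ ((1:ℝ)/2) := Real.sqrt_eq_rpow ρ
      have hrp : (0:ℝ) < ρ ^ (σ - 1/2) := Real.rpow_pos_of_pos h0 _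
      -- key1 : √ρ * ε^(2σ-2) ≤ ρ^(σ-1/2)
      have key1 : Real.sqrt ρ * ε ^ (2*σ-2) ≤ ρ ^ (σ - 1/2) := by
        have hsplit : ρ ^ ((1:ℝ)/2) = ρ ^ (σ - 1/2) * ρ ^ (1-σ) := by
          rw [← Real.rpow_add h0]; congr 1; ring
        have hmono : ρ ^ (1-σ) ≤ (ε^2:ℝ) ^ (1-σ) :=
          Real.rpow_le_rpow hρ0 hlt.le (by linarith)
        have hee : ((ε^2:ℝ)) ^ (1-σ) * ε ^ (2*σ-2) = 1 := by
          rw [← Real.rpow_natCast ε 2, ← Real.rpow_mul hε.le, ← Real.rpow_add hε]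
          rw [show ((2:ℕ):ℝ) * (1-σ) + (2*σ-2) = 0 by push_cast; ring]
          exact Real.rpow_zero ε
        calc Real.sqrt ρ * ε ^ (2*σ-2) = ρ ^ (σ - 1/2) * (ρ ^ (1-σ) * ε ^ (2*σ-2)) := by
              rw [hsq, hsplit]; ring
          _ ≤ ρ ^ (σ - 1/2) * (((ε^2:ℝ)) ^ (1-σ) * ε ^ (2*σ-2)) := by
              apply mul_le_mul_of_nonneg_left _ hrp.le
              exact mul_le_mul_of_nonneg_right hmono (Real.rpow_pos_of_pos hε _).le
          _ = ρ ^ (σ - 1/2) := by rw [hee, mul_one]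
      -- key2 : ρ^(3/2) * (ε^(2σ-2)/ε^2) ≤ ρ^(σ-1/2)
      have key2 : ρ ^ ((3:ℝ)/2) * (ε ^ (2*σ-2) / ε^2) ≤ ρ ^ (σ - 1/2) := by
        have hsplit : ρ ^ ((3:ℝ)/2) = ρ ^ (σ - 1/2) * ρ ^ (2-σ) := by
          rw [← Real.rpow_add h0]; congr 1; ring
        have hmono : ρ ^ (2-σ) ≤ (ε^2:ℝ) ^ (2-σ) :=
          Real.rpow_le_rpow hρ0 hlt.le (by linarith)
        have hee : ((ε^2:ℝ)) ^ (2-σ) * (ε ^ (2*σ-2) / ε^2) = 1 := by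
          rw [← Real.rpow_natCast ε 2, ← Real.rpow_mul hε.le, ← Real.rpow_sub hε,
            ← Real.rpow_add hε]
          rw [show ((2:ℕ):ℝ) * (2-σ) + (2*σ-2-((2:ℕ):ℝ)) = 0 by push_cast; ring]
          exact Real.rpow_zero ε
        calc ρ ^ ((3:ℝ)/2) * (ε ^ (2*σ-2) / ε^2)
            = ρ ^ (σ - 1/2) * (ρ ^ (2-σ) * (ε ^ (2*σ-2) / ε^2)) := by rw [hsplit]; ring
          _ ≤ ρ ^ (σ - 1/2) * (((ε^2:ℝ)) ^ (2-σ) * (ε ^ (2*σ-2) / ε^2)) := by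
              apply mul_le_mul_of_nonneg_left _ hrp.le
              exact mul_le_mul_of_nonneg_right hmono (by positivity)
          _ = ρ ^ (σ - 1/2) := by rw [hee, mul_one]
      have t1 : |Real.sqrt ρ * G1 σ β ε ρ| ≤ 10 * |β| * ρ ^ (σ - 1/2) := by
        rw [abs_mul, abs_of_nonneg (Real.sqrt_nonneg ρ)]
        calc Real.sqrt ρ * |G1 σ β ε ρ| ≤ Real.sqrt ρ * (10 * (|β| * ε ^ (2*σ-2))) :=
              mul_le_mul_of_nonneg_left hG1 (Real.sqrt_nonneg ρ)
          _ = 10 * |β| * (Real.sqrt ρ * ε ^ (2*σ-2)) := by ring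
          _ ≤ 10 * |β| * ρ ^ (σ - 1/2) :=
              mul_le_mul_of_nonneg_left key1 (by positivity)
      have t2 : |ρ ^ ((3:ℝ)/2) * G2 σ β ε ρ| ≤ 20 * |β| * ρ ^ (σ - 1/2) := by
        rw [abs_mul, abs_of_nonneg (Real.rpow_nonneg hρ0 _)]
        calc ρ ^ ((3:ℝ)/2) * |G2 σ β ε ρ|
            ≤ ρ ^ ((3:ℝ)/2) * (20 * (|β| * ε ^ (2*σ-2)) / ε^2) :=
              mul_le_mul_of_nonneg_left hG2 (Real.rpow_nonneg hρ0 _)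
          _ = 20 * |β| * (ρ ^ ((3:ℝ)/2) * (ε ^ (2*σ-2) / ε^2)) := by ring
          _ ≤ 20 * |β| * ρ ^ (σ - 1/2) :=
              mul_le_mul_of_nonneg_left key2 (by positivity)
      calc |Real.sqrt ρ * G1 σ β ε ρ| + |ρ ^ ((3:ℝ)/2) * G2 σ β ε ρ|
          ≤ 10 * |β| * ρ ^ (σ - 1/2) + 20 * |β| * ρ ^ (σ - 1/2) := add_le_add t1 t2
        _ ≤ (30 * |β| + 1) * ρ ^ (σ - 1/2) := by nlinarith [hrp.le, abs_nonneg β]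
  · -- power region
    have hρpos : (0:ℝ) < ρ := lt_of_lt_of_le he hge
    rw [deriv1_ge σ β ε ρ hε hge, deriv2_ge σ β ε ρ hε hge]
    have hsq : Real.sqrt ρ = ρ ^ ((1:ℝ)/2) := Real.sqrt_eq_rpow ρ
    have hrp : (0:ℝ) < ρ ^ (σ - 1/2) := Real.rpow_pos_of_pos hρpos _
    have e1 : Real.sqrt ρ * (β * (σ * ρ ^ (σ-1))) = β * σ * ρ ^ (σ - 1/2) := by
      have hmul : ρ ^ ((1:ℝ)/2) * ρ ^ (σ-1) = ρ ^ (σ - 1/2) := by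
        rw [← Real.rpow_add hρpos]; congr 1; ring
      rw [hsq]
      calc ρ ^ ((1:ℝ)/2) * (β * (σ * ρ ^ (σ-1))) = β * σ * (ρ ^ ((1:ℝ)/2) * ρ ^ (σ-1)) := by ring
        _ = β * σ * ρ ^ (σ - 1/2) := by rw [hmul]
    have e2 : ρ ^ ((3:ℝ)/2) * (β * (σ * ((σ-1) * ρ ^ (σ-1-1)))) =
        β * (σ * (σ-1)) * ρ ^ (σ - 1/2) := by
      have hmul : ρ ^ ((3:ℝ)/2) * ρ ^ (σ-1-1) = ρ ^ (σ - 1/2) := by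
        rw [← Real.rpow_add hρpos]; congr 1; ring
      calc ρ ^ ((3:ℝ)/2) * (β * (σ * ((σ-1) * ρ ^ (σ-1-1))))
          = β * (σ * (σ-1)) * (ρ ^ ((3:ℝ)/2) * ρ ^ (σ-1-1)) := by ring
        _ = β * (σ * (σ-1)) * ρ ^ (σ - 1/2) := by rw [hmul]
    have hσabs : |σ| ≤ 1 := abs_le.mpr ⟨by linarith, by linarith⟩
    have hσσ : |σ * (σ-1)| ≤ 1 := abs_le.mpr ⟨by nlinarith, by nlinarith⟩
    have hb1 : |β * σ| ≤ |β| := by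
      rw [abs_mul]; exact mul_le_of_le_one_right (abs_nonneg β) hσabs
    have hb2 : |β * (σ * (σ-1))| ≤ |β| := by
      rw [abs_mul]; exact mul_le_of_le_one_right (abs_nonneg β) hσσ
    have t1 : |β * σ * ρ ^ (σ - 1/2)| ≤ |β| * ρ ^ (σ - 1/2) := by
      rw [abs_mul, abs_of_pos hrp]
      exact mul_le_mul_of_nonneg_right hb1 hrp.le
    have t2 : |β * (σ * (σ-1)) * ρ ^ (σ - 1/2)| ≤ |β| * ρ ^ (σ - 1/2) := by
      rw [abs_mul, abs_of_pos hrp]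
      exact mul_le_mul_of_nonneg_right hb2 hrp.le
    rw [e1, e2]
    calc |β * σ * ρ ^ (σ - 1/2)| + |β * (σ * (σ-1)) * ρ ^ (σ - 1/2)|
        ≤ |β| * ρ ^ (σ - 1/2) + |β| * ρ ^ (σ - 1/2) := add_le_add t1 t2
      _ ≤ (30 * |β| + 1) * ρ ^ (σ - 1/2) := by nlinarith [hrp.le, abs_nonneg β]
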